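/- (Proposition 4.) The Möbius function of the lattice ℰ^n of embedded subsets of an n-set between the bottom element (∅,P_⊥) and the top element (N,P^⊤) equals the Möbius function of the lattice of partitions of an (n+1)-set between its bottom and top: μ_{ℰ^n}((∅,P_⊥),(N,P^⊤)) = μ_{𝒫^{n+1}} = (−1)^n · n!. -/

import Mathlib

open scoped BigOperators

/-- `modp n A` is the modular partition `P^A_⊥` of `Fin n` whose unique (possibly)
non-singleton block is `A`, all other blocks being singletons. -/
def modp (n : ℕ) (A : Set (Fin n)) : Setoid (Fin n) where
  r x y := x = y ∨ (x ∈ A ∧ y ∈ A)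
  iseqv := by
    refine ⟨fun _ => Or.inl rfl, ?_, ?_⟩
    · rintro x y (rfl | ⟨hx, hy⟩)
      · exact Or.inl rfl
      · exact Or.inr ⟨hy, hx⟩
    · rintro x y z (rfl | ⟨hx, hy⟩) h
      · exact h
      · rcases h with rfl | ⟨hy', hz⟩
        · exact Or.inr ⟨hx, hy⟩
        · exact Or.inr ⟨hx, hz⟩

/-- The product `X^N = 2^N × 𝒫^N` of the subset lattice and the partition lattice,
ordered componentwise. -/
abbrev XN (n : ℕ) := Set (Fin n) × Setoid (Fin n)

/-- The closure operator `cl` on `X^N`:  `cl(∅,P) = (∅,P)` and, for `A ≠ ∅`,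
`cl(A,P) = (Ā, P ⊔ P^A_⊥)` where `Ā` is the block of `P ⊔ P^A_⊥` containing `A`. -/
def EmbClosure (n : ℕ) (x : XN n) : XN n :=
  ({y | ∃ a ∈ x.1, (x.2 ⊔ modp n x.1) y a}, x.2 ⊔ modp n x.1)

/-- An embedded subset is a pair that coincides with its closure. -/
def IsEmbedded (n : ℕ) (x : XN n) : Prop := EmbClosure n x = x

/-- The lattice `ℰ^N` of embedded subsets, with the induced order. -/
abbrev Emb (n : ℕ) := {x : XN n // IsEmbedded n x}

lemma modp_le_of_subsingleton {n : ℕ} {A : Set (Fin n)} (h : A.Subsingleton)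
    (Q : Setoid (Fin n)) : modp n A ≤ Q := by
  rw [Setoid.le_def]
  intro x y hxy
  rcases hxy with rfl | ⟨hx, hy⟩
  · exact Q.refl' x
  · obtain rfl := h hx hy
    exact Q.refl' x

lemma modp_eq_bot_of_subsingleton {n : ℕ} {A : Set (Fin n)} (h : A.Subsingleton) :
    modp n A = ⊥ :=
  le_antisymm (modp_le_of_subsingleton h ⊥) bot_le

lemma embedded_empty (n : ℕ) (Q : Setoid (Fin n)) : IsEmbedded n (∅, Q) := by
  unfold IsEmbedded EmbClosure
  refine Prod.ext ?_ ?_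
  · simp
  · simpa using sup_eq_left.mpr (modp_le_of_subsingleton Set.subsingleton_empty Q)

lemma embedded_univ_top (n : ℕ) : IsEmbedded n (Set.univ, ⊤) := by
  unfold IsEmbedded EmbClosure
  refine Prod.ext ?_ ?_
  · ext y
    simp only [Set.mem_setOf_eq, Set.mem_univ, iff_true]
    exact ⟨y, trivial, Setoid.refl' _ y⟩
  · exact sup_eq_left.mpr le_top

lemma embedded_singleton (n : ℕ) (i : Fin n) : IsEmbedded n ({i}, ⊥) := by
  have hb : modp n ({i} : Set (Fin n)) = ⊥ :=
    modp_eq_bot_of_subsingleton Set.subsingleton_singleton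
  unfold IsEmbedded EmbClosure
  refine Prod.ext ?_ ?_
  · ext y
    simp only [Set.mem_setOf_eq, hb, sup_idem, Set.mem_singleton_iff]
    constructor
    · rintro ⟨a, ha, hrel⟩
      subst ha
      have h' : ((⊥ : Setoid (Fin n)) ⊔ modp n ({a} : Set (Fin n))) y a := hrel
      rw [hb, sup_idem] at h'
      simpa [Setoid.bot_def] using h'
    · rintro rfl
      exact ⟨y, rfl, Setoid.refl' _ y⟩
  · simp [hb]

/-- The bottom element `(∅, P_⊥)` of `ℰ^N`. -/
def botE (n : ℕ) : Emb n := ⟨(∅, ⊥), embedded_empty n ⊥⟩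

/-- The top element `(N, P^⊤)` of `ℰ^N`. -/
def topE (n : ℕ) : Emb n := ⟨(Set.univ, ⊤), embedded_univ_top n⟩

/-- The atom `({i}, P_⊥)` of `ℰ^N`. -/
def atomS (n : ℕ) (i : Fin n) : Emb n := ⟨({i}, ⊥), embedded_singleton n i⟩

/-- The atom `(∅, [ij])` of `ℰ^N`, where `[ij]` is the atom of the partition lattice
whose unique non-singleton block is the pair `{i, j}`. -/
def atomP (n : ℕ) (i j : Fin n) : Emb n := ⟨(∅, modp n {i, j}), embedded_empty n _⟩

/-- A pair is an atom candidate: of the form `({i},P_⊥)` or `(∅,[ij])` with `i ≠ j`. -/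
def IsAtomPair (n : ℕ) (a : XN n) : Prop :=
  (∃ i : Fin n, a = ({i}, ⊥)) ∨ ∃ i j : Fin n, i ≠ j ∧ a = (∅, modp n {i, j})

/-- The number of blocks `|P|` of a partition. -/
noncomputable def numBlocks {α : Type*} (P : Setoid α) : ℕ := P.classes.ncard

/-- The rank function `r(A,P) = (n − |P|) + min{|A|,1}` of `ℰ^N`. -/
noncomputable def erank (n : ℕ) (x : XN n) : ℕ := (n - numBlocks x.2) + min x.1.ncard 1

/-- The partition `Q^S` of `S` induced by a partition `Q` of `N`. -/
def indPart {n : ℕ} (S : Set (Fin n)) (Q : Setoid (Fin n)) : Setoid S :=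
  Setoid.comap Subtype.val Q

/-- `mu` is the Möbius function of the (finite) poset `α`. -/
def IsMobius {α : Type*} [PartialOrder α] (mu : α → α → ℤ) : Prop :=
  (∀ x, mu x x = 1) ∧
  (∀ x y, ¬x ≤ y → mu x y = 0) ∧
  (∀ x y, x < y → mu x y = -∑ᶠ z ∈ Set.Ico x y, mu x z)

section General

variable {α : Type*} [PartialOrder α]

instance instFiniteSetoid {β : Type*} [Finite β] : Finite (Setoid β) :=
  Finite.of_injective (fun s => ⇑s) fun a b h => Setoid.eq_iff_rel_eq.mpr h

theorem IsMobius.unique [Finite α] {mu nu : α → α → ℤ} (hm : IsMobius mu)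
    (hn : IsMobius nu) : mu = nu := by
  have wf : WellFounded ((· < ·) : α → α → Prop) := (Finite.to_wellFoundedLT (α := α)).wf
  funext x
  suffices h : ∀ y, mu x y = nu x y from funext h
  intro y
  induction y using WellFounded.induction wf with
  | _ y ih =>
    rcases eq_or_ne x y with rfl | hne
    · rw [hm.1, hn.1]
    by_cases hle : x ≤ y
    · have hlt : x < y := lt_of_le_of_ne hle hne
      rw [hm.2.2 x y hlt, hn.2.2 x y hlt]
      congr 1
      exact finsum_mem_congr rfl fun z hz => ih z hz.2
    · rw [hm.2.1 x y hle, hn.2.1 x y hle]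

theorem IsMobius.comp {β : Type*} [PartialOrder β] (e : α ≃o β) {mu : β → β → ℤ}
    (h : IsMobius mu) : IsMobius fun x y => mu (e x) (e y) := by
  refine ⟨fun x => h.1 _, fun x y hxy => h.2.1 _ _ (by simpa using hxy), fun x y hxy => ?_⟩
  show mu (e x) (e y) = _
  rw [h.2.2 _ _ (by simpa using hxy)]
  congr 1
  have himg : Set.Ico (e x) (e y) = e '' Set.Ico x y := by
    ext w
    constructor
    · rintro ⟨h1, h2⟩
      exact ⟨e.symm w, ⟨by simpa using (e.symm.monotone h1 : _), by
        simpa [e.lt_iff_lt] using (e.symm.strictMono h2 : _)⟩, by simp⟩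
    · rintro ⟨z, ⟨h1, h2⟩, rfl⟩
      exact ⟨e.monotone h1, e.strictMono h2⟩
  rw [himg, finsum_mem_image (e.injective.injOn)]

theorem IsMobius.restrict {a : α} {mu : α → α → ℤ} (h : IsMobius mu) :
    IsMobius fun x y : {z : α // a ≤ z} => mu x.1 y.1 := by
  refine ⟨fun x => h.1 _, fun x y hxy => h.2.1 _ _ (fun hc => hxy hc), fun x y hxy => ?_⟩
  have hlt : x.1 < y.1 := Subtype.coe_lt_coe.mpr hxy
  show mu x.1 y.1 = _
  rw [h.2.2 _ _ hlt]
  congr 1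
  have himg : Set.Ico x.1 y.1 = Subtype.val '' Set.Ico x y := by
    ext w
    constructor
    · rintro ⟨h1, h2⟩
      exact ⟨⟨w, le_trans x.2 h1⟩, ⟨h1, h2⟩, rfl⟩
    · rintro ⟨z, ⟨h1, h2⟩, rfl⟩
      exact ⟨h1, h2⟩
  rw [himg, finsum_mem_image (Subtype.val_injective.injOn)]

theorem incidence_isMobius [Fintype α] [DecidableEq α] [LocallyFiniteOrder α] :
    IsMobius fun x y : α => (IncidenceAlgebra.mu ℤ x y : ℤ) := by
  refine ⟨fun x => IncidenceAlgebra.mu_self (𝕜 := ℤ) x,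
    fun x y hxy => IncidenceAlgebra.apply_eq_zero_of_not_le hxy _, fun x y hxy => ?_⟩
  show IncidenceAlgebra.mu ℤ x y = _
  rw [IncidenceAlgebra.mu_eq_neg_sum_Ico_of_ne hxy.ne, ← Finset.coe_Ico, finsum_mem_coe_finset]

end General

section Weisner
variable {L : Type*} [Lattice L] [BoundedOrder L] [Finite L]

theorem IsMobius.weisner {mu : L → L → ℤ} (h : IsMobius mu) {a : L} (ha : a ≠ ⊤) :
    ∑ᶠ x ∈ {x : L | x ⊓ a = ⊥}, mu x ⊤ = 0 := by
  classical
  letI : Fintype L := Fintype.ofFinite L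
  letI : LocallyFiniteOrder L := Fintype.toLocallyFiniteOrder
  have hμ : IsMobius fun x y : L => (IncidenceAlgebra.mu ℤ x y : ℤ) := incidence_isMobius
  rw [h.unique hμ]
  have hset : {x : L | x ⊓ a = ⊥} = ↑(Finset.univ.filter fun x : L => x ⊓ a = ⊥) := by
    ext x; simp
  rw [hset, finsum_mem_coe_finset, Finset.sum_filter]
  have key : ∀ x : L, (if x ⊓ a = ⊥ then (IncidenceAlgebra.mu ℤ x ⊤ : ℤ) else 0)
      = ∑ z : L, if z ≤ x ∧ z ≤ a then
          IncidenceAlgebra.mu ℤ ⊥ z * IncidenceAlgebra.mu ℤ x ⊤ else 0 := by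
    intro x
    have h1 : ∑ z : L, (if z ≤ x ∧ z ≤ a then
          IncidenceAlgebra.mu ℤ ⊥ z * IncidenceAlgebra.mu ℤ x ⊤ else 0)
        = (∑ z ∈ Finset.Icc ⊥ (x ⊓ a), IncidenceAlgebra.mu ℤ ⊥ z)
            * IncidenceAlgebra.mu ℤ x ⊤ := by
      rw [Finset.sum_mul, ← Finset.sum_filter]
      refine Finset.sum_congr ?_ fun z _ => rfl
      ext z; simp [Finset.mem_Icc, le_inf_iff]
    rw [h1, IncidenceAlgebra.sum_Icc_mu_right]
    by_cases hx : x ⊓ a = ⊥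
    · simp [hx]
    · have hx' : ¬(⊥ = x ⊓ a) := fun hh => hx hh.symm
      simp [hx, hx']
  rw [Finset.sum_congr rfl (fun x _ => key x), Finset.sum_comm]
  refine Finset.sum_eq_zero fun z _ => ?_
  by_cases hza : z ≤ a
  · have hz : z ≠ ⊤ := fun hz => ha (top_le_iff.mp (hz ▸ hza))
    have h2 : ∑ x : L, (if z ≤ x ∧ z ≤ a then
          IncidenceAlgebra.mu ℤ ⊥ z * IncidenceAlgebra.mu ℤ x ⊤ else 0)
        = IncidenceAlgebra.mu ℤ ⊥ z * ∑ x ∈ Finset.Icc z ⊤, IncidenceAlgebra.mu ℤ x ⊤ := by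
      rw [Finset.mul_sum, ← Finset.sum_filter]
      refine Finset.sum_congr ?_ fun x _ => rfl
      ext x; simp [Finset.mem_Icc, hza, le_top]
    rw [h2, IncidenceAlgebra.sum_Icc_mu_left]
    simp [hz]
  · refine Finset.sum_eq_zero fun x _ => ?_
    simp [hza]

end Weisner

lemma modp_rel {n : ℕ} {A : Set (Fin n)} {x y : Fin n} :
    modp n A x y ↔ x = y ∨ (x ∈ A ∧ y ∈ A) := Iff.rfl

lemma setoid_inf_rel {β : Type*} {x y : Setoid β} {u v : β} :
    (x ⊓ y) u v ↔ x u v ∧ y u v := Iff.rfl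

lemma setoid_bot_rel {β : Type*} {u v : β} : (⊥ : Setoid β) u v ↔ u = v := by
  rw [show ((⊥ : Setoid β) u v) = ((· = ·) u v : Prop) from congrFun (congrFun Setoid.bot_def u) v]

lemma setoid_inf_eq_bot_iff {β : Type*} {x y : Setoid β} :
    x ⊓ y = ⊥ ↔ ∀ u v, x u v → y u v → u = v := by
  constructor
  · intro h u v hx hy
    have : (x ⊓ y) u v := ⟨hx, hy⟩
    rw [h] at this
    exact setoid_bot_rel.mp this
  · intro h
    refine le_antisymm (Setoid.le_def.mpr ?_) bot_le
    intro u v huv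
    exact setoid_bot_rel.mpr (h u v huv.1 huv.2)

/-- Order iso of Setoid lattices from an equivalence of the underlying types. -/
def setoidCongr {β γ : Type*} (e : β ≃ γ) : Setoid β ≃o Setoid γ where
  toFun s := Setoid.comap e.symm s
  invFun s := Setoid.comap e s
  left_inv s := Setoid.ext fun x y => by simp [Setoid.comap_rel]
  right_inv s := Setoid.ext fun x y => by simp [Setoid.comap_rel]
  map_rel_iff' := by
    intro s t
    constructor
    · intro h
      rw [Setoid.le_def]
      intro x y hxy
      have := Setoid.le_def.mp h (x := e x) (y := e y)
        (by show s (e.symm (e x)) (e.symm (e y)); simpa using hxy)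
      rw [Setoid.comap_rel] at this
      have h2 : t (e.symm (e x)) (e.symm (e y)) := this
      rwa [Equiv.symm_apply_apply, Equiv.symm_apply_apply] at h2
    · intro h
      rw [Setoid.le_def]
      intro x y hxy
      rw [Setoid.comap_rel] at hxy ⊢
      exact Setoid.le_def.mp h hxy

theorem orderIso_map_least {β L : Type*} [PartialOrder β] [PartialOrder L] [OrderBot L]
    (e : β ≃o L) {b0 : β} (hb : ∀ b, b0 ≤ b) : e b0 = ⊥ :=
  le_bot_iff.mp (by
    calc e b0 ≤ e (e.symm ⊥) := e.monotone (hb _)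
    _ = ⊥ := e.apply_symm_apply _)

theorem orderIso_map_greatest {β L : Type*} [PartialOrder β] [PartialOrder L] [OrderTop L]
    (e : β ≃o L) {b0 : β} (hb : ∀ b, b ≤ b0) : e b0 = ⊤ :=
  top_le_iff.mp (by
    calc (⊤ : L) = e (e.symm ⊤) := (e.apply_symm_apply _).symm
    _ ≤ e b0 := e.monotone (hb _))

lemma castPred_eq_iff' {n : ℕ} {u : Fin (n + 2)} (hu : u ≠ Fin.last (n + 1)) {i : Fin (n + 1)} :
    u.castPred hu = i ↔ u = i.castSucc := by
  constructor
  · intro h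
    rw [← h, Fin.castSucc_castPred]
  · intro h
    subst h
    exact Fin.castPred_castSucc

private def collapse {n : ℕ} (i : Fin (n + 1)) (x : Fin (n + 2)) : Fin (n + 1) :=
  if h : x = Fin.last (n + 1) then i else x.castPred h

lemma collapse_spec {n : ℕ} (i : Fin (n + 1)) (u v : Fin (n + 2)) :
    collapse i u = collapse i v ↔ modp (n + 2) {i.castSucc, Fin.last (n + 1)} u v := by
  unfold collapse
  rw [modp_rel]
  simp only [Set.mem_insert_iff, Set.mem_singleton_iff]
  by_cases hu : u = Fin.last (n + 1) <;> by_cases hv : v = Fin.last (n + 1)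
  · subst hu; subst hv; simp
  · subst hu
    rw [dif_pos rfl, dif_neg hv, eq_comm, castPred_eq_iff' hv]
    constructor
    · intro h
      exact Or.inr ⟨Or.inr rfl, Or.inl h⟩
    · rintro (h | ⟨_, h | h⟩)
      · exact absurd h.symm hv
      · exact h
      · exact absurd h hv
  · subst hv
    rw [dif_pos rfl, dif_neg hu, castPred_eq_iff' hu]
    constructor
    · intro h
      exact Or.inr ⟨Or.inl h, Or.inr rfl⟩
    · rintro (h | ⟨h | h, _⟩)
      · exact absurd h hu
      · exact h
      · exact absurd h hu
  · rw [dif_neg hu, dif_neg hv]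
    constructor
    · intro h
      left
      have := congrArg Fin.castSucc h
      rwa [Fin.castSucc_castPred, Fin.castSucc_castPred] at this
    · rintro (rfl | ⟨h1 | h1, h2 | h2⟩)
      · rfl
      · subst h1; subst h2; rfl
      · exact absurd h2 hv
      · exact absurd h1 hu
      · exact absurd h1 hu

lemma collapse_surjective {n : ℕ} (i : Fin (n + 1)) : Function.Surjective (collapse i) := by
  intro j
  refine ⟨j.castSucc, ?_⟩
  unfold collapse
  rw [dif_neg (Fin.castSucc_lt_last j).ne]
  exact Fin.castPred_castSucc

/-- Classification of the partitions meeting `modp {x | x ≠ last}` trivially. -/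
lemma inf_a_eq_bot_class {n : ℕ} :
    {x : Setoid (Fin (n + 2)) | x ⊓ modp (n + 2) {y | y ≠ Fin.last (n + 1)} = ⊥}
      = insert ⊥ (Set.range fun i : Fin (n + 1) =>
          modp (n + 2) {i.castSucc, Fin.last (n + 1)}) := by
  set lst := Fin.last (n + 1)
  ext x
  simp only [Set.mem_setOf_eq, Set.mem_insert_iff, Set.mem_range]
  constructor
  · intro hx
    rw [setoid_inf_eq_bot_iff] at hx
    have hx' : ∀ u v, x u v → u ≠ lst → v ≠ lst → u = v := by
      intro u v h h1 h2
      exact hx u v h (Or.inr ⟨h1, h2⟩)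
    by_cases hxb : x = ⊥
    · exact Or.inl hxb
    right
    have hex : ∃ u v, x u v ∧ u ≠ v := by
      by_contra hcon
      push_neg at hcon
      exact hxb (le_antisymm (Setoid.le_def.mpr fun {u v} h =>
        setoid_bot_rel.mpr (hcon u v h)) bot_le)
    obtain ⟨u, v, huv, hne⟩ := hex
    obtain ⟨c, hc, hcne⟩ : ∃ c, x c lst ∧ c ≠ lst := by
      by_cases hul : u = lst
      · exact ⟨v, x.symm' (hul ▸ huv), fun h => hne ((hul.trans h.symm).symm ▸ (hul.trans h.symm))⟩
      · by_cases hvl : v = lst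
        · exact ⟨u, hvl ▸ huv, hul⟩
        · exact absurd (hx' u v huv hul hvl) hne
    -- key: any element non-trivially related in x equals c
    have key : ∀ y y', x y y' → y ≠ y' → y ≠ lst → y = c := by
      intro y y' h hne' hyl
      by_cases hy'l : y' = lst
      · exact hx' y c (x.trans' (hy'l ▸ h) (x.symm' hc)) hyl hcne
      · exact absurd (hx' y y' h hyl hy'l) hne'
    obtain ⟨j, hj⟩ := Fin.exists_castSucc_eq.mpr hcne
    refine ⟨j, ?_⟩
    refine (Setoid.ext fun w z => ?_).symm
    rw [modp_rel]
    simp only [Set.mem_insert_iff, Set.mem_singleton_iff, hj]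
    constructor
    · intro hwz
      by_cases hwzeq : w = z
      · exact Or.inl hwzeq
      refine Or.inr ⟨?_, ?_⟩
      · by_cases hwl : w = lst
        · exact Or.inr hwl
        · exact Or.inl (key w z hwz hwzeq hwl)
      · by_cases hzl : z = lst
        · exact Or.inr hzl
        · exact Or.inl (key z w (x.symm' hwz) (fun h => hwzeq h.symm) hzl)
    · rintro (rfl | ⟨h1 | h1, h2 | h2⟩) <;> subst_vars <;>
        first
        | exact x.refl' _
        | exact hc
        | exact x.symm' hc
  · rintro (rfl | ⟨j, rfl⟩)
    · exact bot_inf_eq _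
    · rw [setoid_inf_eq_bot_iff]
      rintro u v (rfl | ⟨hu, hv⟩) h2
      · rfl
      rcases h2 with rfl | ⟨hu2, hv2⟩
      · rfl
      simp only [Set.mem_insert_iff, Set.mem_singleton_iff] at hu hv
      rcases hu with hu | hu
      · rcases hv with hv | hv
        · rw [hu, hv]
        · exact absurd hv hv2
      · exact absurd hu hu2

lemma setoid_top_rel {β : Type*} (u v : β) : (⊤ : Setoid β) u v := by
  rw [show ((⊤ : Setoid β) u v) = ((⊤ : β → β → Prop) u v : Prop) from
    congrFun (congrFun Setoid.top_def u) v]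
  trivial

theorem partition_mu (n : ℕ) : ∀ mu : Setoid (Fin (n + 1)) → Setoid (Fin (n + 1)) → ℤ,
    IsMobius mu → mu ⊥ ⊤ = (-1) ^ n * (Nat.factorial n : ℤ) := by
  induction n with
  | zero =>
    intro mu hmu
    have hbt : (⊥ : Setoid (Fin 1)) = ⊤ := by
      refine Setoid.ext fun x y => ?_
      have hxy : x = y := Subsingleton.elim x y
      subst hxy
      exact ⟨fun _ => setoid_top_rel x x, fun _ => setoid_bot_rel.mpr rfl⟩
    rw [hbt, hmu.1]
    norm_num
  | succ n ih =>
    intro mu hmu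
    have ha : modp (n + 2) {y : Fin (n + 2) | y ≠ Fin.last (n + 1)} ≠ ⊤ := by
      intro h
      have h2 : modp (n + 2) {y : Fin (n + 2) | y ≠ Fin.last (n + 1)}
          ((0 : Fin (n + 1)).castSucc) (Fin.last (n + 1)) := by
        rw [h]; exact setoid_top_rel _ _
      rcases modp_rel.mp h2 with h1 | ⟨_, h2'⟩
      · exact (Fin.castSucc_lt_last 0).ne h1
      · exact h2' rfl
    have hW := hmu.weisner ha
    rw [inf_a_eq_bot_class] at hW
    set p : Fin (n + 1) → Setoid (Fin (n + 2)) :=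
      fun i => modp (n + 2) {i.castSucc, Fin.last (n + 1)} with hp
    have hp_ne_bot : ∀ i, p i ≠ ⊥ := by
      intro i h
      have hrel : p i i.castSucc (Fin.last (n + 1)) :=
        Or.inr ⟨Or.inl rfl, Or.inr rfl⟩
      rw [h, setoid_bot_rel] at hrel
      exact (Fin.castSucc_lt_last i).ne hrel
    have hp_inj : Function.Injective p := by
      intro j k h
      have hrel : p k k.castSucc (Fin.last (n + 1)) :=
        Or.inr ⟨Or.inl rfl, Or.inr rfl⟩
      rw [← h] at hrel
      rcases hrel with h1 | ⟨h2, _⟩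
      · exact absurd h1 (Fin.castSucc_lt_last k).ne
      · rcases h2 with h2 | h2
        · exact (Fin.castSucc_injective _ h2).symm
        · exact absurd h2 (Fin.castSucc_lt_last k).ne
    have hbot_notmem : (⊥ : Setoid (Fin (n + 2))) ∉ Set.range p := by
      rintro ⟨i, hi⟩
      exact hp_ne_bot i hi
    rw [finsum_mem_insert _ hbot_notmem (Set.finite_range p),
      finsum_mem_range hp_inj] at hW
    have hterm : ∀ i, mu (p i) ⊤ = (-1) ^ n * (Nat.factorial n : ℤ) := by
      intro i
      have hres : IsMobius fun x y : {z : Setoid (Fin (n + 2)) // p i ≤ z} =>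
        mu x.1 y.1 := hmu.restrict
      have hlift : ∀ u v : Fin (n + 2), (p i) u v → collapse i u = collapse i v :=
        fun u v h => (collapse_spec i u v).mpr h
      let g : Quotient (p i) → Fin (n + 1) := Quotient.lift (collapse i) hlift
      have hg : Function.Bijective g := by
        constructor
        · intro q1 q2
          induction q1 using Quotient.ind
          induction q2 using Quotient.ind
          intro h
          exact Quotient.sound ((collapse_spec i _ _).mp h)
        · intro j
          obtain ⟨u, hu⟩ := collapse_surjective i j
          exact ⟨⟦u⟧, hu⟩
      let eqv : Quotient (p i) ≃ Fin (n + 1) := Equiv.ofBijective g hg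
      let e : {z : Setoid (Fin (n + 2)) // p i ≤ z} ≃o Setoid (Fin (n + 1)) :=
        (Setoid.correspondence (p i)).trans (setoidCongr eqv)
      have hS : IsMobius fun u v : Setoid (Fin (n + 1)) =>
          mu (e.symm u).1 (e.symm v).1 := hres.comp e.symm
      have hIH := ih _ hS
      have hsb : e.symm ⊥ = ⟨p i, le_refl _⟩ := by
        have hl := orderIso_map_least e (b0 := ⟨p i, le_refl _⟩) (fun b => b.2)
        rw [← hl, OrderIso.symm_apply_apply]
      have hst : e.symm ⊤ = ⟨⊤, le_top⟩ := by
        have hg2 := orderIso_map_greatest e (b0 := ⟨⊤, le_top⟩)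
          (fun b => show b.1 ≤ ⊤ from le_top)
        rw [← hg2, OrderIso.symm_apply_apply]
      rw [hsb, hst] at hIH
      exact hIH
    simp only [hterm] at hW
    rw [finsum_eq_sum_of_fintype, Finset.sum_const, Finset.card_univ,
      Fintype.card_fin] at hW
    have hmain : mu ⊥ ⊤ = -((n + 1 : ℤ) * ((-1) ^ n * (Nat.factorial n : ℤ))) := by
      rw [nsmul_eq_mul] at hW
      push_cast at hW ⊢
      linarith
    rw [hmain, Nat.factorial_succ]
    push_cast
    ring

section EmbIso
variable {n : ℕ}

lemma embedded_modp_le' {A : Set (Fin n)} {P : Setoid (Fin n)}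
    (h : IsEmbedded n (A, P)) : modp n A ≤ P := by
  have h2 := congrArg Prod.snd h
  simp only [EmbClosure] at h2
  exact sup_eq_left.mp h2

lemma embedded_closed {A : Set (Fin n)} {P : Setoid (Fin n)}
    (h : IsEmbedded n (A, P)) : ∀ i j : Fin n, P i j → j ∈ A → i ∈ A := by
  have hsup : P ⊔ modp n A = P := sup_eq_left.mpr (embedded_modp_le' h)
  have h1 := congrArg Prod.fst h
  simp only [EmbClosure] at h1
  intro i j hij hj
  rw [← h1]
  refine ⟨j, hj, ?_⟩
  rw [hsup]
  exact hij

/-- The forward map from partitions of an `(n+1)`-set to embedded subsets of an `n`-set. -/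
def toEmb (Q : Setoid (Fin (n + 1))) : XN n :=
  ({i : Fin n | Q i.castSucc (Fin.last n)}, Setoid.comap Fin.castSucc Q)

lemma toEmb_embedded (Q : Setoid (Fin (n + 1))) : IsEmbedded n (toEmb Q) := by
  have hle : modp n {i : Fin n | Q i.castSucc (Fin.last n)} ≤ Setoid.comap Fin.castSucc Q := by
    rw [Setoid.le_def]
    rintro x y (rfl | ⟨hx, hy⟩)
    · exact Setoid.refl' _ x
    · rw [Setoid.comap_rel]
      exact Q.trans' hx (Q.symm' hy)
  have hsup : Setoid.comap Fin.castSucc Q ⊔ modp n {i : Fin n | Q i.castSucc (Fin.last n)}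
      = Setoid.comap Fin.castSucc Q := sup_eq_left.mpr hle
  unfold IsEmbedded EmbClosure toEmb
  simp only
  rw [hsup]
  refine Prod.ext ?_ rfl
  ext y
  simp only [Set.mem_setOf_eq, Setoid.comap_rel]
  constructor
  · rintro ⟨a, ha, hya⟩
    exact Q.trans' hya ha
  · intro hy
    exact ⟨y, hy, Q.refl' _⟩

/-- Extension of an embedded pair to a partition of the `(n+1)`-set. -/
def extS (A : Set (Fin n)) (P : Setoid (Fin n)) (hle : modp n A ≤ P)
    (hcl : ∀ i j : Fin n, P i j → j ∈ A → i ∈ A) : Setoid (Fin (n + 1)) where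
  r x y :=
    (x = Fin.last n ∧ y = Fin.last n) ∨
    (∃ i j : Fin n, x = i.castSucc ∧ y = j.castSucc ∧ P i j) ∨
    (∃ j : Fin n, x = Fin.last n ∧ y = j.castSucc ∧ j ∈ A) ∨
    (∃ i : Fin n, x = i.castSucc ∧ y = Fin.last n ∧ i ∈ A)
  iseqv := by
    constructor
    · intro x
      by_cases hx : x = Fin.last n
      · exact Or.inl ⟨hx, hx⟩
      · obtain ⟨i, hi⟩ := Fin.exists_castSucc_eq.mpr hx
        exact Or.inr (Or.inl ⟨i, i, hi.symm, hi.symm, P.refl' i⟩)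
    · rintro x y (⟨rfl, rfl⟩ | ⟨i, j, rfl, rfl, hP⟩ | ⟨j, rfl, rfl, hj⟩ | ⟨i, rfl, rfl, hi⟩)
      · exact Or.inl ⟨rfl, rfl⟩
      · exact Or.inr (Or.inl ⟨j, i, rfl, rfl, P.symm' hP⟩)
      · exact Or.inr (Or.inr (Or.inr ⟨j, rfl, rfl, hj⟩))
      · exact Or.inr (Or.inr (Or.inl ⟨i, rfl, rfl, hi⟩))
    · rintro x y z (⟨rfl, rfl⟩ | ⟨i, j, rfl, rfl, hP⟩ | ⟨j, rfl, rfl, hj⟩ | ⟨i, rfl, rfl, hi⟩) h2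
      · exact h2
      · -- x = castSucc i, y = castSucc j, P i j
        rcases h2 with ⟨h3, rfl⟩ | ⟨j', k, h3, rfl, hP'⟩ | ⟨k, h3, rfl, hk⟩ | ⟨j', h3, rfl, hj'⟩
        · exact absurd h3 (Fin.castSucc_lt_last j).ne
        · obtain rfl : j = j' := Fin.castSucc_injective _ h3
          exact Or.inr (Or.inl ⟨i, k, rfl, rfl, P.trans' hP hP'⟩)
        · exact absurd h3 (Fin.castSucc_lt_last j).ne
        · obtain rfl : j = j' := Fin.castSucc_injective _ h3
          exact Or.inr (Or.inr (Or.inr ⟨i, rfl, rfl, hcl i j hP hj'⟩))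
      · -- x = last, y = castSucc j, j ∈ A
        rcases h2 with ⟨h3, rfl⟩ | ⟨j', k, h3, rfl, hP'⟩ | ⟨k, h3, rfl, hk⟩ | ⟨j', h3, rfl, hj'⟩
        · exact absurd h3 (Fin.castSucc_lt_last j).ne
        · obtain rfl : j = j' := Fin.castSucc_injective _ h3
          exact Or.inr (Or.inr (Or.inl ⟨k, rfl, rfl, hcl k j (P.symm' hP') hj⟩))
        · exact absurd h3 (Fin.castSucc_lt_last j).ne
        · exact Or.inl ⟨rfl, rfl⟩
      · -- x = castSucc i, y = last, i ∈ A
        rcases h2 with ⟨h3, rfl⟩ | ⟨j', k, h3, rfl, hP'⟩ | ⟨k, h3, rfl, hk⟩ | ⟨j', h3, rfl, hj'⟩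
        · exact Or.inr (Or.inr (Or.inr ⟨i, rfl, rfl, hi⟩))
        · exact absurd h3.symm (Fin.castSucc_lt_last j').ne
        · exact Or.inr (Or.inl ⟨i, k, rfl, rfl, hle (Or.inr ⟨hi, hk⟩)⟩)
        · exact absurd h3.symm (Fin.castSucc_lt_last j').ne

lemma extS_rel {A : Set (Fin n)} {P : Setoid (Fin n)} {hle : modp n A ≤ P}
    {hcl : ∀ i j : Fin n, P i j → j ∈ A → i ∈ A} {x y : Fin (n + 1)} :
    extS A P hle hcl x y ↔
      (x = Fin.last n ∧ y = Fin.last n) ∨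
      (∃ i j : Fin n, x = i.castSucc ∧ y = j.castSucc ∧ P i j) ∨
      (∃ j : Fin n, x = Fin.last n ∧ y = j.castSucc ∧ j ∈ A) ∨
      (∃ i : Fin n, x = i.castSucc ∧ y = Fin.last n ∧ i ∈ A) := Iff.rfl

lemma toEmb_extS {A : Set (Fin n)} {P : Setoid (Fin n)} (hle : modp n A ≤ P)
    (hcl : ∀ i j : Fin n, P i j → j ∈ A → i ∈ A) :
    toEmb (extS A P hle hcl) = (A, P) := by
  unfold toEmb
  refine Prod.ext ?_ ?_
  · ext i
    rw [Set.mem_setOf_eq, extS_rel]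
    constructor
    · rintro (⟨h1, _⟩ | ⟨i', j', h1, h2, _⟩ | ⟨j', h1, h2, _⟩ | ⟨i', h1, _, hi'⟩)
      · exact absurd h1 (Fin.castSucc_lt_last i).ne
      · exact absurd h2.symm (Fin.castSucc_lt_last j').ne
      · exact absurd h1 (Fin.castSucc_lt_last i).ne
      · exact (Fin.castSucc_injective _ h1) ▸ hi'
    · intro hi
      exact Or.inr (Or.inr (Or.inr ⟨i, rfl, rfl, hi⟩))
  · refine Setoid.ext fun i j => ?_
    rw [Setoid.comap_rel, extS_rel]
    constructor
    · rintro (⟨h1, _⟩ | ⟨i', j', h1, h2, hP⟩ | ⟨j', h1, _, _⟩ | ⟨i', _, h2, _⟩)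
      · exact absurd h1 (Fin.castSucc_lt_last i).ne
      · rw [Fin.castSucc_injective _ h1, Fin.castSucc_injective _ h2]
        exact hP
      · exact absurd h1 (Fin.castSucc_lt_last i).ne
      · exact absurd h2 (Fin.castSucc_lt_last j).ne
    · intro hP
      exact Or.inr (Or.inl ⟨i, j, rfl, rfl, hP⟩)

lemma toEmb_le_iff {Q Q' : Setoid (Fin (n + 1))} :
    toEmb Q ≤ toEmb Q' ↔ Q ≤ Q' := by
  unfold toEmb
  rw [Prod.mk_le_mk]
  constructor
  · rintro ⟨hA, hP⟩
    rw [Setoid.le_def]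
    intro x y hxy
    by_cases hx : x = Fin.last n <;> by_cases hy : y = Fin.last n
    · subst hx; subst hy; exact Q'.refl' _
    · subst hx
      obtain ⟨j, hj⟩ := Fin.exists_castSucc_eq.mpr hy
      subst hj
      exact Q'.symm' (hA (Q.symm' hxy : Q j.castSucc (Fin.last n)))
    · subst hy
      obtain ⟨i, hi⟩ := Fin.exists_castSucc_eq.mpr hx
      subst hi
      exact hA (hxy : Q i.castSucc (Fin.last n))
    · obtain ⟨i, hi⟩ := Fin.exists_castSucc_eq.mpr hx
      obtain ⟨j, hj⟩ := Fin.exists_castSucc_eq.mpr hy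
      subst hi; subst hj
      exact Setoid.le_def.mp hP (by rwa [Setoid.comap_rel] : Setoid.comap Fin.castSucc Q i j)
  · intro hQ
    constructor
    · intro i hi
      exact Setoid.le_def.mp hQ hi
    · rw [Setoid.le_def]
      intro x y hxy
      rw [Setoid.comap_rel] at hxy ⊢
      exact Setoid.le_def.mp hQ hxy

/-- The order isomorphism between partitions of the `(n+1)`-set and embedded subsets. -/
noncomputable def embIso (n : ℕ) : Setoid (Fin (n + 1)) ≃o Emb n where
  toEquiv := Equiv.ofBijective (fun Q => (⟨toEmb Q, toEmb_embedded Q⟩ : Emb n)) (by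
    constructor
    · intro Q Q' h
      have h' : toEmb Q = toEmb Q' := congrArg Subtype.val h
      exact le_antisymm (toEmb_le_iff.mp h'.le) (toEmb_le_iff.mp h'.ge)
    · rintro ⟨⟨A, P⟩, hemb⟩
      refine ⟨extS A P (embedded_modp_le' hemb) (embedded_closed hemb), ?_⟩
      exact Subtype.ext (toEmb_extS _ _))
  map_rel_iff' := by
    intro Q Q'
    show toEmb Q ≤ toEmb Q' ↔ Q ≤ Q'
    exact toEmb_le_iff

lemma embIso_bot (n : ℕ) : embIso n ⊥ = botE n := by
  refine Subtype.ext ?_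
  show toEmb ⊥ = (∅, ⊥)
  unfold toEmb
  refine Prod.ext ?_ ?_
  · ext i
    simp only [Set.mem_setOf_eq, Set.mem_empty_iff_false, iff_false]
    intro h
    exact (Fin.castSucc_lt_last i).ne (setoid_bot_rel.mp h)
  · refine Setoid.ext fun i j => ?_
    rw [Setoid.comap_rel, setoid_bot_rel, setoid_bot_rel]
    exact ⟨fun h => Fin.castSucc_injective _ h, fun h => h ▸ rfl⟩

lemma embIso_top (n : ℕ) : embIso n ⊤ = topE n := by
  refine Subtype.ext ?_
  show toEmb ⊤ = (Set.univ, ⊤)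
  unfold toEmb
  refine Prod.ext ?_ ?_
  · ext i
    simp only [Set.mem_setOf_eq, Set.mem_univ, iff_true]
    exact setoid_top_rel _ _
  · exact Setoid.ext fun i j => ⟨fun _ => setoid_top_rel _ _, fun _ => setoid_top_rel _ _⟩

end EmbIso

theorem mobius_bot_top (n : ℕ) (hn : 1 ≤ n)
    (mu1 : Emb n → Emb n → ℤ) (mu2 : Setoid (Fin (n + 1)) → Setoid (Fin (n + 1)) → ℤ)
    (h1 : IsMobius mu1) (h2 : IsMobius mu2) :
    mu1 (botE n) (topE n) = mu2 ⊥ ⊤ ∧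
    mu1 (botE n) (topE n) = (-1) ^ n * (Nat.factorial n : ℤ) := by
  have h1' : IsMobius fun Q Q' : Setoid (Fin (n + 1)) => mu1 (embIso n Q) (embIso n Q') :=
    h1.comp (embIso n)
  have huniq := h1'.unique h2
  have key : mu1 (botE n) (topE n) = mu2 ⊥ ⊤ := by
    have hc := congrFun (congrFun huniq ⊥) ⊤
    rw [embIso_bot, embIso_top] at hc
    exact hc
  exact ⟨key, key.trans (partition_mu n mu2 h2)⟩
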